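/- The cyclic coded-at-the-bottom matrix-matrix scheme (Algorithm 5) with n = m·a₂b₂ workers, a_u uncoded and a_c coded A-block-columns per worker (cyclically placed with Δ_A = a₂) and mb₁ uncoded B-block-columns per worker (Δ_B = mb₂), has recovery threshold τ = n - m·a₂b₁ + κ_min, where κ_min is the minimum positive integer κ satisfying ⌈κ/(mb₁)⌉ + κ·a_c ≥ a₂ - a_u + 1. -/

import Mathlib

lemma two_mul_mod {M x : ℕ} (h1 : M ≤ x) (h2 : x < 2 * M) : x % M = x - M := by
  rw [Nat.mod_eq_sub_mod h1]; exact Nat.mod_eq_of_lt (by omega)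

lemma inv_mod {M bj g : ℕ} (hbj : bj < M) (hg : g < M) :
    (bj + M - (bj + M - g) % M) % M = g := by
  rcases Nat.lt_or_ge g (bj + 1) with h | h
  · have e1 : (bj + M - g) % M = bj - g := by
      rw [two_mul_mod (by omega) (by omega)]; omega
    rw [e1, show bj + M - (bj - g) = M + g by omega, Nat.add_mod_left]
    exact Nat.mod_eq_of_lt hg
  · have e1 : (bj + M - g) % M = bj + M - g := Nat.mod_eq_of_lt (by omega)
    rw [e1, show bj + M - (bj + M - g) = g by omega]
    exact Nat.mod_eq_of_lt hg

lemma div_of_mul_add {a x r : ℕ} (hr : r < a) : (x * a + r) / a = x := by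
  have ha : 0 < a := by omega
  rw [mul_comm, Nat.mul_add_div ha, Nat.div_eq_of_lt hr, Nat.add_zero]

lemma mod_of_mul_add {a x r : ℕ} (hr : r < a) : (x * a + r) % a = r := by
  rw [mul_comm, Nat.mul_add_mod, Nat.mod_eq_of_lt hr]

lemma shift_closed_univ {a : ℕ} [NeZero a] (S : Finset (ZMod a))
    (hcl : ∀ x ∈ S, x + 1 ∈ S) (hne : S.Nonempty) : S = Finset.univ := by
  obtain ⟨s, hs⟩ := hne
  have hk : ∀ k : ℕ, s + (k : ZMod a) ∈ S := by
    intro k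
    induction k with
    | zero => simpa using hs
    | succ k ih => push_cast; rw [← add_assoc]; exact hcl _ ih
  apply Finset.eq_univ_of_forall
  intro t
  have := hk (t - s).val
  rwa [ZMod.natCast_val, ZMod.cast_id, add_sub_cancel] at this

noncomputable def cov {a : ℕ} (k : ℕ) (S : Finset (ZMod a)) : Finset (ZMod a) :=
  S.biUnion (fun s => (Finset.range k).image (fun p => s + (p : ℕ)))

lemma mem_cov {a : ℕ} {k : ℕ} {S : Finset (ZMod a)} {x : ZMod a} :
    x ∈ cov k S ↔ ∃ s ∈ S, ∃ p < k, s + (p : ℕ) = x := by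
  simp [cov]

lemma subset_cov {a : ℕ} {k : ℕ} (hk : 1 ≤ k) (S : Finset (ZMod a)) : S ⊆ cov k S := by
  intro s hs
  exact mem_cov.2 ⟨s, hs, 0, by omega, by simp⟩

lemma cov_succ {a : ℕ} (k : ℕ) (hk : 1 ≤ k) (S : Finset (ZMod a)) :
    cov (k + 1) S = cov k S ∪ (cov k S).image (· + 1) := by
  ext x
  simp only [Finset.mem_union, Finset.mem_image, mem_cov]
  constructor
  · rintro ⟨s, hs, p, hp, rfl⟩
    rcases Nat.lt_or_ge p k with h | h
    · exact Or.inl ⟨s, hs, p, h, rfl⟩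
    · refine Or.inr ⟨s + ((p - 1 : ℕ) : ZMod a), ⟨s, hs, p - 1, by omega, rfl⟩, ?_⟩
      rw [add_assoc]
      congr 1
      have h1 : p - 1 + 1 = p := by omega
      rw [← Nat.cast_succ, Nat.succ_eq_add_one, h1]
  · rintro (⟨s, hs, p, hp, rfl⟩ | ⟨y, ⟨s, hs, p, hp, rfl⟩, rfl⟩)
    · exact ⟨s, hs, p, by omega, rfl⟩
    · exact ⟨s, hs, p + 1, by omega, by push_cast; rw [add_assoc]⟩

lemma cov_card {a : ℕ} [NeZero a] (S : Finset (ZMod a)) (hne : S.Nonempty) :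
    ∀ k, 1 ≤ k → min a (S.card + k - 1) ≤ (cov k S).card := by
  intro k
  induction k with
  | zero => omega
  | succ k ih =>
    intro _
    rcases Nat.eq_zero_or_pos k with rfl | hk1
    · calc min a (S.card + 1 - 1) ≤ S.card := by omega
        _ ≤ _ := Finset.card_le_card (subset_cov le_rfl S)
    · have ha : Fintype.card (ZMod a) = a := ZMod.card a
      have hAne : (cov k S).Nonempty := hne.mono (subset_cov hk1 S)
      rw [cov_succ k hk1 S]
      by_cases hu : cov k S = Finset.univ
      · have : a ≤ (cov k S ∪ (cov k S).image (· + 1)).card :=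
          calc a = (cov k S).card := by rw [hu, Finset.card_univ, ha]
            _ ≤ _ := Finset.card_le_card Finset.subset_union_left
        omega
      · have hnotsub : ¬ (cov k S).image (· + 1) ⊆ cov k S := by
          intro hsub
          exact hu (shift_closed_univ _ (fun x hx => hsub (Finset.mem_image_of_mem _ hx)) hAne)
        have hlt : cov k S ⊂ cov k S ∪ (cov k S).image (· + 1) :=
          ⟨Finset.subset_union_left, fun hsub => hnotsub (Finset.subset_union_right.trans hsub)⟩
        have h1 : (cov k S).card + 1 ≤ (cov k S ∪ (cov k S).image (· + 1)).card :=
          Finset.card_lt_card hlt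
        have h2 : (cov k S).card < a :=
          lt_of_le_of_ne (le_trans (Finset.card_le_univ _) (le_of_eq ha))
            (fun h => hu (Finset.eq_univ_of_card _ (h.trans ha.symm)))
        have := ih hk1
        omega

lemma contB_count (m a₂ b₁ b₂ : ℕ) (ha₂ : 0 < a₂) (hb : b₁ ≤ b₂) (hb2 : 0 < m * b₂)
    (bj : ℕ) (hbj : bj < m * b₂) :
    m * b₁ * a₂ ≤ (Finset.univ.filter
      (fun i : Fin (m * a₂ * b₂) => (bj + m * b₂ - (i : ℕ) / a₂) % (m * b₂) < m * b₁)).card := by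
  set M := m * b₂ with hM
  have ha₂' : 0 < a₂ := ha₂
  have hb1M : m * b₁ ≤ M := by rw [hM]; exact Nat.mul_le_mul_left m hb
  have hc : m * b₁ * a₂ = a₂ * (m * b₁) := by ring
  have := Finset.card_le_card_of_injOn
    (f := fun j => (⟨((bj + M - j / a₂) % M) * a₂ + j % a₂, by
        have h1 : (bj + M - j / a₂) % M < M := Nat.mod_lt _ hb2
        have h2 : j % a₂ < a₂ := Nat.mod_lt _ ha₂
        have h3 : ((bj + M - j / a₂) % M) * a₂ ≤ (M - 1) * a₂ :=
          Nat.mul_le_mul_right a₂ (by omega)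
        have h4 : (M - 1) * a₂ + a₂ = M * a₂ := by
          calc (M-1) * a₂ + a₂ = (M - 1 + 1) * a₂ := by ring
            _ = M * a₂ := by rw [Nat.sub_add_cancel hb2]
        have h5 : m * a₂ * b₂ = M * a₂ := by rw [hM]; ring
        omega⟩ : Fin (m * a₂ * b₂)))
    (s := Finset.range (m * b₁ * a₂))
    (t := Finset.univ.filter
      (fun i : Fin (m * a₂ * b₂) => (bj + M - (i : ℕ) / a₂) % M < m * b₁))
    ?_ ?_
  · simpa using this
  · intro j hj
    simp only [Finset.mem_coe, Finset.mem_range] at hj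
    simp only [Finset.mem_coe, Finset.mem_filter, Finset.mem_univ, true_and]
    have hja : j / a₂ < m * b₁ := Nat.div_lt_of_lt_mul (by omega)
    have h2 : j % a₂ < a₂ := Nat.mod_lt _ ha₂
    rw [div_of_mul_add h2, inv_mod hbj (by omega)]
    exact hja
  · intro j1 h1 j2 h2 heq
    simp only [Finset.mem_coe, Finset.mem_range] at h1 h2
    have heq' : ((bj + M - j1 / a₂) % M) * a₂ + j1 % a₂
        = ((bj + M - j2 / a₂) % M) * a₂ + j2 % a₂ := congrArg Fin.val heq
    have hm1 : j1 % a₂ < a₂ := Nat.mod_lt _ ha₂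
    have hm2 : j2 % a₂ < a₂ := Nat.mod_lt _ ha₂
    have hs1 : (bj + M - j1 / a₂) % M = (bj + M - j2 / a₂) % M := by
      have h5 : (((bj + M - j1 / a₂) % M) * a₂ + j1 % a₂) / a₂
          = (((bj + M - j2 / a₂) % M) * a₂ + j2 % a₂) / a₂ := by rw [heq']
      rwa [div_of_mul_add hm1, div_of_mul_add hm2] at h5
    have hs2 : j1 % a₂ = j2 % a₂ := by
      have h5 : (((bj + M - j1 / a₂) % M) * a₂ + j1 % a₂) % a₂
          = (((bj + M - j2 / a₂) % M) * a₂ + j2 % a₂) % a₂ := by rw [heq']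
      rwa [mod_of_mul_add hm1, mod_of_mul_add hm2] at h5
    have hd1 : j1 / a₂ < m * b₁ := Nat.div_lt_of_lt_mul (by omega)
    have hd2 : j2 / a₂ < m * b₁ := Nat.div_lt_of_lt_mul (by omega)
    have hdd : j1 / a₂ = j2 / a₂ := by
      have e1 := inv_mod (M := M) hbj (show j1 / a₂ < M by omega)
      have e2 := inv_mod (M := M) hbj (show j2 / a₂ < M by omega)
      rw [← e1, ← e2, hs1]
    have e1 := Nat.div_add_mod j1 a₂
    have e2 := Nat.div_add_mod j2 a₂
    rw [hdd, hs2] at e1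
    omega

/-- Recovery threshold of the cyclic coded-at-the-bottom matrix-matrix scheme (Algorithm 5):
`n = m·a₂·b₂` workers; worker `i` holds the `a_u` uncoded A-block-columns
`i, ..., i+a_u-1 (mod a₂)` plus `a_c` generically coded A-block-columns, and the `m·b₁`
uncoded B-block-columns `⌊i/a₂⌋, ..., ⌊i/a₂⌋+m·b₁-1 (mod m·b₂)`.  For a set `T` of workers,
the unknowns `A_*ᵀ B_j` are decodable iff the workers of `T` holding `B_j` provide
(distinct uncoded A-symbols) + (their number)·a_c ≥ a₂ equations.  Then the recovery
threshold is `τ = n - m·a₂·b₁ + κ_min`, where `κ_min` is the least positive `κ` with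
`⌈κ/(m·b₁)⌉ + κ·a_c ≥ a₂ - a_u + 1`: any `τ` workers decode everything, and some `τ - 1`
workers do not. -/
theorem stmt16 (m a₂ b₁ b₂ au ac κmin : ℕ)
    (hm : 0 < m) (ha₂ : 0 < a₂) (hb₁ : 0 < b₁) (hb : b₁ ≤ b₂)
    (hau : 0 < au) (hstore : au + ac ≤ a₂)
    (hκ0 : 0 < κmin)
    (hκ : a₂ - au + 1 ≤ (κmin + m * b₁ - 1) / (m * b₁) + κmin * ac)
    (hκmin : ∀ κ, 0 < κ → κ < κmin →
      (κ + m * b₁ - 1) / (m * b₁) + κ * ac < a₂ - au + 1) :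
    let n := m * a₂ * b₂
    let τ := n - m * a₂ * b₁ + κmin
    let contB : Fin n → Fin (m * b₂) → Prop := fun i bj =>
      ((bj : ℕ) + m * b₂ - (i : ℕ) / a₂) % (m * b₂) < m * b₁
    let decodes : Finset (Fin n) → Fin (m * b₂) → Prop := fun T bj =>
      a₂ ≤ ((T.filter (fun i => contB i bj)).biUnion
              (fun i => (Finset.range au).image
                (fun p => ((i : ℕ) % a₂ + p) % a₂))).card
          + (T.filter (fun i => contB i bj)).card * ac
    (∀ T : Finset (Fin n), τ ≤ T.card → ∀ bj : Fin (m * b₂), decodes T bj) ∧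
    (∃ T : Finset (Fin n), T.card = τ - 1 ∧ ∃ bj : Fin (m * b₂), ¬ decodes T bj) := by
  intro n τ contB decodes
  haveI : NeZero a₂ := ⟨ha₂.ne'⟩
  have hM : 0 < m * b₂ := Nat.mul_pos hm (lt_of_lt_of_le hb₁ hb)
  have hmb₁ : 0 < m * b₁ := Nat.mul_pos hm hb₁
  have hcn : m * a₂ * b₁ ≤ n := Nat.mul_le_mul_left _ hb
  have hn : n = m * a₂ * b₂ := rfl
  have hτ : τ = n - m * a₂ * b₁ + κmin := rfl
  clear_value τ
  constructor
  · intro T hT bj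
    show a₂ ≤ ((T.filter (fun i => contB i bj)).biUnion
              (fun i => (Finset.range au).image
                (fun p => ((i : ℕ) % a₂ + p) % a₂))).card
          + (T.filter (fun i => contB i bj)).card * ac
    set F := T.filter (fun i => contB i bj) with hF
    -- F has at least κmin elements
    have hcount := contB_count m a₂ b₁ b₂ ha₂ hb hM (bj : ℕ) bj.isLt
    have hFcard : κmin ≤ F.card := by
      have hsplit : F.card + (T.filter (fun i => ¬ contB i bj)).card = T.card := by
        rw [hF]
        exact Finset.card_filter_add_card_filter_not (s := T) (p := fun i => contB i bj)
      have hsub : T.filter (fun i => ¬ contB i bj) ⊆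
          Finset.univ.filter (fun i => ¬ contB i bj) := by
        intro i hi
        simp only [Finset.mem_filter, Finset.mem_univ, true_and] at hi ⊢
        exact hi.2
      have hsplitU := Finset.card_filter_add_card_filter_not
        (s := (Finset.univ : Finset (Fin n))) (p := fun i => contB i bj)
      have hU : (Finset.univ : Finset (Fin n)).card = n := by
        simp
      have hle := Finset.card_le_card hsub
      have hcount' : m * b₁ * a₂ ≤ (Finset.univ.filter (fun i => contB i bj)).card := hcount
      have hcc : m * b₁ * a₂ = m * a₂ * b₁ := by ring
      omega
    set q := (κmin + m * b₁ - 1) / (m * b₁) with hq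
    have hq1 : 1 ≤ q := by
      rw [hq, Nat.le_div_iff_mul_le hmb₁]
      omega
    have hqmul : q * (m * b₁) ≤ κmin + m * b₁ - 1 := Nat.div_mul_le_self _ _
    -- pigeonhole into the m*b₁ valid groups
    set G := (Finset.range (m * b₂)).filter
      (fun g => ((bj : ℕ) + m * b₂ - g) % (m * b₂) < m * b₁) with hG
    have hGcard : G.card ≤ m * b₁ := by
      have hsub : G ⊆ (Finset.range (m * b₁)).image
          (fun t => ((bj : ℕ) + m * b₂ - t) % (m * b₂)) := by
        intro g hg
        simp only [hG, Finset.mem_filter, Finset.mem_range] at hg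
        simp only [Finset.mem_image, Finset.mem_range]
        exact ⟨((bj : ℕ) + m * b₂ - g) % (m * b₂), hg.2, inv_mod bj.isLt hg.1⟩
      calc G.card ≤ _ := Finset.card_le_card hsub
        _ ≤ m * b₁ := le_trans Finset.card_image_le (by simp)
    have hmaps : ∀ i ∈ F, (i : ℕ) / a₂ ∈ G := by
      intro i hi
      simp only [hF, Finset.mem_filter] at hi
      simp only [hG, Finset.mem_filter, Finset.mem_range]
      have h1 : (i : ℕ) < m * b₂ * a₂ := by
        have := i.isLt
        have e : m * a₂ * b₂ = m * b₂ * a₂ := by ring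
        omega
      have e2 : a₂ * (m * b₂) = m * b₂ * a₂ := Nat.mul_comm _ _
      exact ⟨Nat.div_lt_of_lt_mul (by omega), hi.2⟩
    have hmul : G.card * (q - 1) < F.card := by
      have h1 : G.card * (q - 1) ≤ (m * b₁) * (q - 1) :=
        Nat.mul_le_mul_right _ hGcard
      have h2 : (m * b₁) * (q - 1) + (m * b₁) = (m * b₁) * q := by
        rw [← Nat.mul_succ]; congr 1; omega
      have h3 : (m * b₁) * q = q * (m * b₁) := Nat.mul_comm _ _
      omega
    obtain ⟨g, hgG, hfib⟩ :=
      Finset.exists_lt_card_fiber_of_mul_lt_card_of_maps_to hmaps hmul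
    set Fg := F.filter (fun i : Fin n => (i : ℕ) / a₂ = g) with hFg
    have hFgq : q ≤ Fg.card := by omega
    set R := Fg.image (fun i : Fin n => ((i : ℕ) : ZMod a₂)) with hR
    have hRcard : R.card = Fg.card := by
      apply Finset.card_image_of_injOn
      intro i1 hi1 i2 hi2 hcast
      simp only [hFg, Finset.mem_coe, Finset.mem_filter] at hi1 hi2
      have hv : (i1 : ℕ) % a₂ = (i2 : ℕ) % a₂ := by
        have := congrArg ZMod.val hcast
        rwa [ZMod.val_natCast, ZMod.val_natCast] at this
      have e1 := Nat.div_add_mod (i1 : ℕ) a₂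
      have e2 := Nat.div_add_mod (i2 : ℕ) a₂
      rw [hi1.2, hv] at e1
      rw [hi2.2] at e2
      exact Fin.ext (by omega)
    have hRne : R.Nonempty := by
      rw [← Finset.card_pos, hRcard]; omega
    have hcov := cov_card R hRne au hau
    set C := F.biUnion (fun i => (Finset.range au).image
      (fun p => ((i : ℕ) % a₂ + p) % a₂)) with hC
    have hsubC : cov au R ⊆ C.image (fun y : ℕ => (y : ZMod a₂)) := by
      intro x hx
      obtain ⟨s, hs, p, hp, rfl⟩ := mem_cov.1 hx
      simp only [hR, Finset.mem_image] at hs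
      obtain ⟨i, hiFg, rfl⟩ := hs
      have hiF : i ∈ F := by
        simp only [hFg, Finset.mem_filter] at hiFg
        exact hiFg.1
      refine Finset.mem_image.2 ⟨((i : ℕ) % a₂ + p) % a₂, ?_, ?_⟩
      · exact Finset.mem_biUnion.2 ⟨i, hiF,
          Finset.mem_image.2 ⟨p, Finset.mem_range.2 hp, rfl⟩⟩
      · push_cast [ZMod.natCast_mod]
        ring
    have hCcard : (cov au R).card ≤ C.card :=
      le_trans (Finset.card_le_card hsubC) Finset.card_image_le
    have hFac : κmin * ac ≤ F.card * ac := Nat.mul_le_mul_right ac hFcard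
    omega
  · -- lower bound: a bad set of τ - 1 workers
    clear_value n
    obtain ⟨c, hc⟩ : ∃ c, c = m * a₂ * b₁ := ⟨_, rfl⟩
    rw [← hc] at hτ hcn
    obtain ⟨κ, hκκ⟩ : ∃ κ, κ = κmin - 1 := ⟨_, rfl⟩
    obtain ⟨q2, hq2⟩ : ∃ q2, q2 = (κ + m * b₁ - 1) / (m * b₁) := ⟨_, rfl⟩
    have hnpos : 0 < n := by
      have : 0 < m * a₂ * b₂ := Nat.mul_pos (Nat.mul_pos hm ha₂) (lt_of_lt_of_le hb₁ hb)
      omega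
    have hcpos : 0 < c := by
      have : 0 < m * a₂ * b₁ := Nat.mul_pos (Nat.mul_pos hm ha₂) hb₁
      omega
    have hb1b2 : m * b₁ ≤ m * b₂ := Nat.mul_le_mul_left m hb
    have hbjlt : m * b₁ - 1 < m * b₂ := by omega
    set bj : Fin (m * b₂) := ⟨m * b₁ - 1, hbjlt⟩ with hbj
    have hbjv : (bj : ℕ) = m * b₁ - 1 := rfl
    -- characterize contB for this bj
    have hcontB : ∀ i : Fin n, contB i bj ↔ (i : ℕ) < c := by
      intro i
      obtain ⟨di, hdi⟩ : ∃ d, d = (i : ℕ) / a₂ := ⟨_, rfl⟩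
      have hg : di < m * b₂ := by
        rw [hdi]
        have h1 : (i : ℕ) < n := i.isLt
        have e : n = m * b₂ * a₂ := by rw [hn]; ring
        have e2 : a₂ * (m * b₂) = m * b₂ * a₂ := Nat.mul_comm _ _
        exact Nat.div_lt_of_lt_mul (by omega)
      have hmain : (m * b₁ - 1 + m * b₂ - di) % (m * b₂) < m * b₁ ↔ di < m * b₁ := by
        rcases Nat.lt_or_ge di (m * b₁) with h | h
        · have hx1 : m * b₂ ≤ m * b₁ - 1 + m * b₂ - di := by omega
          have hx2 : m * b₁ - 1 + m * b₂ - di < 2 * (m * b₂) := by omega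
          have e1 : (m * b₁ - 1 + m * b₂ - di) % (m * b₂)
              = m * b₁ - 1 + m * b₂ - di - m * b₂ :=
            two_mul_mod hx1 hx2
          rw [e1]
          omega
        · have hx1 : m * b₁ - 1 + m * b₂ - di < m * b₂ := by omega
          have e1 : (m * b₁ - 1 + m * b₂ - di) % (m * b₂)
              = m * b₁ - 1 + m * b₂ - di :=
            Nat.mod_eq_of_lt hx1
          rw [e1]
          omega
      have hiff : di < m * b₁ ↔ (i : ℕ) < c := by
        rw [hdi, Nat.div_lt_iff_lt_mul ha₂]
        have e : m * b₁ * a₂ = m * a₂ * b₁ := by ring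
        omega
      show ((bj : ℕ) + m * b₂ - (i : ℕ) / a₂) % (m * b₂) < m * b₁ ↔ (i : ℕ) < c
      rw [hbjv, ← hdi]
      exact hmain.trans hiff
    -- key numeric inequality
    have hkey : q2 + au - 1 + κ * ac ≤ a₂ - 1 := by
      rcases Nat.eq_zero_or_pos κ with h0 | hκpos
      · subst h0
        have : q2 = 0 := by rw [hq2]; exact Nat.div_eq_of_lt (by omega)
        omega
      · have h5 := hκmin κ hκpos (by omega)
        rw [← hq2] at h5
        omega
    have hql : ∀ l, l < κ → l / (m * b₁) + 1 ≤ q2 := by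
      intro l hl
      have h1 : l / (m * b₁) ≤ (κ - 1) / (m * b₁) := Nat.div_le_div_right (by omega)
      have h2 : (κ - 1 + m * b₁) / (m * b₁) = (κ - 1) / (m * b₁) + 1 :=
        Nat.add_div_right _ hmb₁
      have h3 : κ - 1 + m * b₁ = κ + m * b₁ - 1 := by omega
      rw [h3, ← hq2] at h2
      omega
    have hldiv : ∀ l, l < κ → l / (m * b₁) < a₂ := by
      intro l hl
      have := hql l hl
      omega
    -- the packed workers
    set gg : ℕ → ℕ := fun l => (l % (m * b₁)) * a₂ + l / (m * b₁) with hgg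
    have hglc : ∀ l, l < κ → gg l < c := by
      intro l hl
      have h1 : l % (m * b₁) ≤ m * b₁ - 1 := by
        have := Nat.mod_lt l hmb₁; omega
      have h2 : l / (m * b₁) < a₂ := hldiv l hl
      have h3 : (l % (m * b₁)) * a₂ ≤ (m * b₁ - 1) * a₂ := Nat.mul_le_mul_right a₂ h1
      have h4 : (m * b₁ - 1) * a₂ + a₂ = (m * b₁) * a₂ := by
        calc (m * b₁ - 1) * a₂ + a₂ = (m * b₁ - 1 + 1) * a₂ := by ring
          _ = (m * b₁) * a₂ := by rw [Nat.sub_add_cancel hmb₁]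
      have h5 : (m * b₁) * a₂ = m * a₂ * b₁ := by ring
      show (l % (m * b₁)) * a₂ + l / (m * b₁) < c
      omega
    set val : ℕ → ℕ := fun j => if j < n - c then c + j else gg (j - (n - c)) with hvaldef
    set f : ℕ → Fin n := fun j => ⟨val j % n, Nat.mod_lt _ hnpos⟩ with hf
    have hvv : ∀ j, val j = if j < n - c then c + j else gg (j - (n - c)) := fun j => rfl
    have hval : ∀ j, j < n - c + κ → (f j : ℕ) = val j ∧ val j < n := by
      intro j hj
      have hvn : val j < n := by
        rw [hvv]
        split
        · omega
        · have := hglc (j - (n - c)) (by omega)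
          omega
      exact ⟨Nat.mod_eq_of_lt hvn, hvn⟩
    have hinj : Set.InjOn f (Finset.range (n - c + κ)) := by
      intro j1 h1 j2 h2 heq
      simp only [Finset.coe_range, Set.mem_Iio] at h1 h2
      have e1 := hval j1 h1
      have e2 := hval j2 h2
      have hv : val j1 = val j2 := by
        rw [← e1.1, ← e2.1, heq]
      rw [hvv j1, hvv j2] at hv
      rcases Nat.lt_or_ge j1 (n - c) with hj1 | hj1 <;>
        rcases Nat.lt_or_ge j2 (n - c) with hj2 | hj2
      · rw [if_pos hj1, if_pos hj2] at hv; omega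
      · rw [if_pos hj1, if_neg (by omega)] at hv
        have := hglc (j2 - (n - c)) (by omega)
        omega
      · rw [if_neg (by omega), if_pos hj2] at hv
        have := hglc (j1 - (n - c)) (by omega)
        omega
      · rw [if_neg (by omega), if_neg (by omega)] at hv
        have hl1κ : j1 - (n - c) < κ := by omega
        have hl2κ : j2 - (n - c) < κ := by omega
        have hd1 := hldiv _ hl1κ
        have hd2 := hldiv _ hl2κ
        have hv' : ((j1 - (n - c)) % (m * b₁)) * a₂ + (j1 - (n - c)) / (m * b₁)
            = ((j2 - (n - c)) % (m * b₁)) * a₂ + (j2 - (n - c)) / (m * b₁) := hv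
        have hmm : (j1 - (n - c)) % (m * b₁) = (j2 - (n - c)) % (m * b₁) := by
          have h5 := congrArg (· / a₂) hv'
          rwa [div_of_mul_add hd1, div_of_mul_add hd2] at h5
        have hdd : (j1 - (n - c)) / (m * b₁) = (j2 - (n - c)) / (m * b₁) := by
          have h5 := congrArg (· % a₂) hv'
          rwa [mod_of_mul_add hd1, mod_of_mul_add hd2] at h5
        have e3 := Nat.div_add_mod (j1 - (n - c)) (m * b₁)
        have e4 := Nat.div_add_mod (j2 - (n - c)) (m * b₁)
        rw [hdd, hmm] at e3
        omega
    refine ⟨(Finset.range (n - c + κ)).image f, ?_, bj, ?_⟩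
    · rw [Finset.card_image_of_injOn hinj, Finset.card_range]
      omega
    · -- T does not decode bj
      show ¬ (a₂ ≤
        ((((Finset.range (n - c + κ)).image f).filter (fun i => contB i bj)).biUnion
          (fun i => (Finset.range au).image (fun p => ((i : ℕ) % a₂ + p) % a₂))).card
        + (((Finset.range (n - c + κ)).image f).filter (fun i => contB i bj)).card * ac)
      have hvg : ∀ l, l < κ → val (n - c + l) = gg l := by
        intro l hl
        rw [hvv]
        rw [if_neg (by omega)]
        congr 1
        omega
      have hfilt : (((Finset.range (n - c + κ)).image f).filter (fun i => contB i bj))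
          = (Finset.range κ).image (fun l => f (n - c + l)) := by
        ext i
        simp only [Finset.mem_filter, Finset.mem_image, Finset.mem_range]
        constructor
        · rintro ⟨⟨j, hj, rfl⟩, hcb⟩
          have hiv := hval j hj
          have hic : (f j : ℕ) < c := (hcontB _).1 hcb
          rcases Nat.lt_or_ge j (n - c) with hj1 | hj1
          · exfalso
            have : val j = c + j := by rw [hvv, if_pos hj1]
            omega
          · exact ⟨j - (n - c), by omega, by congr 1; omega⟩
        · rintro ⟨l, hl, rfl⟩
          have hj : n - c + l < n - c + κ := by omega
          refine ⟨⟨n - c + l, hj, rfl⟩, ?_⟩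
          apply (hcontB _).2
          have hiv := hval _ hj
          have h6 := hvg l hl
          have := hglc l hl
          omega
      rw [hfilt]
      have hinj2 : Set.InjOn (fun l => f (n - c + l)) (Finset.range κ) := by
        intro l1 h1 l2 h2 heq
        simp only [Finset.coe_range, Set.mem_Iio] at h1 h2
        have hm1 : (n - c + l1 : ℕ) ∈ (Finset.range (n - c + κ) : Set ℕ) := by
          simp only [Finset.coe_range, Set.mem_Iio]; omega
        have hm2 : (n - c + l2 : ℕ) ∈ (Finset.range (n - c + κ) : Set ℕ) := by
          simp only [Finset.coe_range, Set.mem_Iio]; omega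
        have := hinj hm1 hm2 heq
        omega
      have hcard2 : ((Finset.range κ).image (fun l => f (n - c + l))).card = κ := by
        rw [Finset.card_image_of_injOn hinj2, Finset.card_range]
      have hcov2 : (((Finset.range κ).image (fun l => f (n - c + l))).biUnion
              (fun i => (Finset.range au).image
                (fun p => ((i : ℕ) % a₂ + p) % a₂))) ⊆ Finset.range (q2 + au - 1) := by
        intro x hx
        simp only [Finset.mem_biUnion, Finset.mem_image, Finset.mem_range] at hx
        obtain ⟨i, ⟨l, hl, rfl⟩, p, hp, rfl⟩ := hx
        have hj : n - c + l < n - c + κ := by omega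
        have hiv := hval _ hj
        have hd : l / (m * b₁) < a₂ := hldiv l hl
        have hmod : (f (n - c + l) : ℕ) % a₂ = l / (m * b₁) := by
          rw [hiv.1, hvg l hl]
          exact mod_of_mul_add hd
        rw [hmod]
        have hq2l := hql l hl
        have hlt : l / (m * b₁) + p < a₂ := by omega
        rw [Finset.mem_range, Nat.mod_eq_of_lt hlt]
        omega
      have hcc2 : (((Finset.range κ).image (fun l => f (n - c + l))).biUnion
              (fun i => (Finset.range au).image
                (fun p => ((i : ℕ) % a₂ + p) % a₂))).card ≤ q2 + au - 1 := by
        calc _ ≤ (Finset.range (q2 + au - 1)).card := Finset.card_le_card hcov2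
          _ = q2 + au - 1 := Finset.card_range _
      rw [hcard2]
      omega
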